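/- Let p be a prime, let f, g : F_p → ℂ and K : F_p × F_p → ℂ. Then the quantity I = ( Σ_{s ∈ F_p} | Σ_{x ∈ F_p} K(s − x, x) · f(s − x) · g(x) |² )^(1/2) satisfies I ≤ ‖f‖_{ℓ²}^(1/2) · ‖f‖_{ℓ⁴}^(1/2) · ‖g‖_{ℓ²} · Ω^(1/4), where Ω = ( Σ_{s,u,v ∈ F_p} | Σ_{x ∈ F_p} K(x, s − x) · conj(K(x + u, s − x)) · conj(K(x, s + v − x)) · K(x + u, s + v − x) |² )^(1/2). -/

import Mathlib

set_option maxHeartbeats 1000000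

open Finset

section Aux

variable {G : Type*} [AddCommGroup G] [Fintype G]

/-- Cauchy–Schwarz for complex-valued sums. -/
private lemma cs_abs {ι : Type*} [Fintype ι] (F G : ι → ℂ) :
    ‖∑ i, F i * G i‖ ≤
      Real.sqrt (∑ i, ‖F i‖ ^ 2) * Real.sqrt (∑ i, ‖G i‖ ^ 2) := by
  calc ‖∑ i, F i * G i‖ ≤ ∑ i, ‖F i‖ * ‖G i‖ := by
        simpa using (norm_sum_le univ (fun i => F i * G i))
    _ ≤ _ := Real.sum_mul_le_sqrt_mul_sqrt _ _ _

noncomputable def auxH (f : G → ℂ) (K : G → G → ℂ) (x x' : G) : ℂ :=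
  ∑ s, (K (s - x) x * f (s - x)) * star (K (s - x') x' * f (s - x'))

noncomputable def auxG (K : G → G → ℂ) (a u w : G) : ℂ :=
  ∑ x, K a x * star (K (a + w) (x - w)) * star (K (a + u) x) * K (a + u + w) (x - w)

noncomputable def auxQ (K : G → G → ℂ) (s u v : G) : ℂ :=
  ∑ x, K x (s - x) * star (K (x + u) (s - x)) * star (K x (s + v - x)) * K (x + u) (s + v - x)

private def e4 : (G × G × G × G) ≃ (G × G × G × G) where
  toFun z := (z.2.2.2, z.2.2.2 - z.2.2.1, z.1 + z.2.2.2, z.1 + z.2.1 + z.2.2.2)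
  invFun z := (z.2.2.1 - z.1, z.2.2.2 - z.2.2.1, z.1 - z.2.1, z.1)
  left_inv z := by
    obtain ⟨a, u, w, x⟩ := z
    simp only [Prod.mk.injEq]
    exact ⟨by abel, by abel, by abel, trivial⟩
  right_inv z := by
    obtain ⟨x, x', s, s'⟩ := z
    simp only [Prod.mk.injEq]
    exact ⟨trivial, by abel, by abel, by abel⟩

private def e5 : (G × G × G × G × G) ≃ (G × G × G × G × G) where
  toFun z := (z.1 + z.2.2.2.1, z.2.1, z.2.2.2.2 - z.2.2.2.1, z.1, z.1 + z.2.2.1)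
  invFun z := (z.2.2.2.1, z.2.1, z.2.2.2.2 - z.2.2.2.1, z.1 - z.2.2.2.1,
    z.2.2.1 + z.1 - z.2.2.2.1)
  left_inv z := by
    obtain ⟨a, u, w, x, y⟩ := z
    simp only [Prod.mk.injEq]
    exact ⟨trivial, trivial, by abel, by abel, by abel⟩
  right_inv z := by
    obtain ⟨s, u, v, X, Y⟩ := z
    simp only [Prod.mk.injEq]
    exact ⟨by abel, trivial, by abel, trivial, by abel⟩

private lemma key1 (f g : G → ℂ) (K : G → G → ℂ) :
    ((∑ s, ‖∑ x, K (s - x) x * f (s - x) * g x‖ ^ 2 : ℝ) : ℂ)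
      = ∑ z : G × G, (g z.1 * star (g z.2)) * auxH f K z.1 z.2 := by
  push_cast
  calc (∑ s, (‖∑ x, K (s - x) x * f (s - x) * g x‖ : ℂ) ^ 2)
      = ∑ s, (∑ x, K (s - x) x * f (s - x) * g x) * star (∑ x', K (s - x') x' * f (s - x') * g x') := by
        refine Finset.sum_congr rfl fun s _ => ?_
        rw [Complex.star_def, Complex.mul_conj, ← Complex.sq_norm]
        push_cast; ring
    _ = ∑ s, ∑ x, ∑ x', (K (s - x) x * f (s - x) * g x) * star (K (s - x') x' * f (s - x') * g x') := by
        refine Finset.sum_congr rfl fun s _ => ?_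
        rw [star_sum, Finset.sum_mul_sum]
    _ = ∑ x, ∑ s, ∑ x', (K (s - x) x * f (s - x) * g x) * star (K (s - x') x' * f (s - x') * g x') :=
        Finset.sum_comm
    _ = ∑ x, ∑ x', ∑ s, (K (s - x) x * f (s - x) * g x) * star (K (s - x') x' * f (s - x') * g x') := by
        exact Finset.sum_congr rfl fun x _ => Finset.sum_comm
    _ = ∑ x, ∑ x', (g x * star (g x')) * auxH f K x x' := by
        refine Finset.sum_congr rfl fun x _ => Finset.sum_congr rfl fun x' _ => ?_
        rw [auxH, Finset.mul_sum]
        refine Finset.sum_congr rfl fun s _ => ?_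
        simp only [star_mul]
        ring
    _ = ∑ z : G × G, (g z.1 * star (g z.2)) * auxH f K z.1 z.2 := by
        rw [Fintype.sum_prod_type]

private lemma key2 (f : G → ℂ) (K : G → G → ℂ) :
    ((∑ z : G × G, ‖auxH f K z.1 z.2‖ ^ 2 : ℝ) : ℂ)
      = ∑ z : G × G × G,
          (f z.1 * star (f (z.1 + z.2.2)) * star (f (z.1 + z.2.1)) * f (z.1 + z.2.1 + z.2.2))
            * auxG K z.1 z.2.1 z.2.2 := by
  push_cast
  calc (∑ z : G × G, (‖auxH f K z.1 z.2‖ : ℂ) ^ 2)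
      = ∑ z : G × G × G × G,
          (K (z.2.2.1 - z.1) z.1 * f (z.2.2.1 - z.1)) * star (K (z.2.2.1 - z.2.1) z.2.1 * f (z.2.2.1 - z.2.1))
            * (star (K (z.2.2.2 - z.1) z.1 * f (z.2.2.2 - z.1)) * (K (z.2.2.2 - z.2.1) z.2.1 * f (z.2.2.2 - z.2.1))) := by
        rw [Fintype.sum_prod_type]
        conv_rhs => rw [Fintype.sum_prod_type]
        refine Finset.sum_congr rfl fun x _ => ?_
        conv_rhs => rw [Fintype.sum_prod_type]
        refine Finset.sum_congr rfl fun x' _ => ?_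
        conv_rhs => rw [Fintype.sum_prod_type]
        calc (‖auxH f K x x'‖ : ℂ) ^ 2
            = auxH f K x x' * star (auxH f K x x') := by
              rw [Complex.star_def, Complex.mul_conj, ← Complex.sq_norm]; push_cast; ring
          _ = _ := by
              rw [auxH, star_sum, Finset.sum_mul_sum]
              refine Finset.sum_congr rfl fun s _ => Finset.sum_congr rfl fun s' _ => ?_
              simp only [star_mul, star_star]
              ring
    _ = ∑ z : G × G × G × G,
          (K z.1 z.2.2.2 * f z.1) * star (K (z.1 + z.2.2.1) (z.2.2.2 - z.2.2.1) * f (z.1 + z.2.2.1))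
            * (star (K (z.1 + z.2.1) z.2.2.2 * f (z.1 + z.2.1))
                * (K (z.1 + z.2.1 + z.2.2.1) (z.2.2.2 - z.2.2.1) * f (z.1 + z.2.1 + z.2.2.1))) := by
        refine Eq.symm (Fintype.sum_equiv e4 _ _ fun z => ?_)
        obtain ⟨a, u, w, x⟩ := z
        simp only [e4, Equiv.coe_fn_mk]
        have h1 : a + x - x = a := by abel
        have h2 : a + x - (x - w) = a + w := by abel
        have h3 : a + u + x - x = a + u := by abel
        have h4 : a + u + x - (x - w) = a + u + w := by abel
        rw [h1, h2, h3, h4]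
    _ = ∑ z : G × G × G,
          (f z.1 * star (f (z.1 + z.2.2)) * star (f (z.1 + z.2.1)) * f (z.1 + z.2.1 + z.2.2))
            * auxG K z.1 z.2.1 z.2.2 := by
        conv_rhs => rw [Fintype.sum_prod_type]
        rw [Fintype.sum_prod_type]
        refine Finset.sum_congr rfl fun a _ => ?_
        conv_rhs => rw [Fintype.sum_prod_type]
        rw [Fintype.sum_prod_type]
        refine Finset.sum_congr rfl fun u _ => ?_
        rw [Fintype.sum_prod_type]
        refine Finset.sum_congr rfl fun w _ => ?_
        rw [auxG, Finset.mul_sum]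
        refine Finset.sum_congr rfl fun x _ => ?_
        simp only [star_mul, star_star]
        ring

private lemma key3 (K : G → G → ℂ) :
    (∑ z : G × G × G, ‖auxG K z.1 z.2.1 z.2.2‖ ^ 2)
      = ∑ s, ∑ u, ∑ v, ‖auxQ K s u v‖ ^ 2 := by
  have main : ((∑ z : G × G × G, ‖auxG K z.1 z.2.1 z.2.2‖ ^ 2 : ℝ) : ℂ)
      = ((∑ s, ∑ u, ∑ v, ‖auxQ K s u v‖ ^ 2 : ℝ) : ℂ) := by
    push_cast
    calc (∑ z : G × G × G, (‖auxG K z.1 z.2.1 z.2.2‖ : ℂ) ^ 2)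
        = ∑ z : G × G × G × G × G,
            (K z.1 z.2.2.2.1 * star (K (z.1 + z.2.2.1) (z.2.2.2.1 - z.2.2.1))
              * star (K (z.1 + z.2.1) z.2.2.2.1) * K (z.1 + z.2.1 + z.2.2.1) (z.2.2.2.1 - z.2.2.1))
            * star (K z.1 z.2.2.2.2 * star (K (z.1 + z.2.2.1) (z.2.2.2.2 - z.2.2.1))
              * star (K (z.1 + z.2.1) z.2.2.2.2) * K (z.1 + z.2.1 + z.2.2.1) (z.2.2.2.2 - z.2.2.1)) := by
          rw [Fintype.sum_prod_type]
          conv_rhs => rw [Fintype.sum_prod_type]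
          refine Finset.sum_congr rfl fun a _ => ?_
          rw [Fintype.sum_prod_type]
          conv_rhs => rw [Fintype.sum_prod_type]
          refine Finset.sum_congr rfl fun u _ => ?_
          conv_rhs => rw [Fintype.sum_prod_type]
          refine Finset.sum_congr rfl fun w _ => ?_
          calc (‖auxG K a u w‖ : ℂ) ^ 2
              = auxG K a u w * star (auxG K a u w) := by
                rw [Complex.star_def, Complex.mul_conj, ← Complex.sq_norm]; push_cast; ring
            _ = _ := by
                rw [auxG, star_sum, Finset.sum_mul_sum]
                rw [Fintype.sum_prod_type]
      _ = ∑ z : G × G × G × G × G,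
            (K z.2.2.2.1 (z.1 - z.2.2.2.1) * star (K (z.2.2.2.1 + z.2.1) (z.1 - z.2.2.2.1))
              * star (K z.2.2.2.1 (z.1 + z.2.2.1 - z.2.2.2.1))
              * K (z.2.2.2.1 + z.2.1) (z.1 + z.2.2.1 - z.2.2.2.1))
            * star (K z.2.2.2.2 (z.1 - z.2.2.2.2) * star (K (z.2.2.2.2 + z.2.1) (z.1 - z.2.2.2.2))
              * star (K z.2.2.2.2 (z.1 + z.2.2.1 - z.2.2.2.2))
              * K (z.2.2.2.2 + z.2.1) (z.1 + z.2.2.1 - z.2.2.2.2)) := by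
          refine Fintype.sum_equiv e5 _ _ fun z => ?_
          obtain ⟨a, u, w, x, y⟩ := z
          simp only [e5, Equiv.coe_fn_mk]
          have h1 : a + x - a = x := by abel
          have h2 : a + x + (y - x) - a = y := by abel
          have h3 : a + x - (a + w) = x - w := by abel
          have h4 : a + x + (y - x) - (a + w) = y - w := by abel
          have h5 : a + w + u = a + u + w := by abel
          rw [h1, h2, h3, h4, h5]
          simp only [star_mul, star_star]
          ring
      _ = ∑ s, ∑ u, ∑ v, (‖auxQ K s u v‖ : ℂ) ^ 2 := by
          rw [Fintype.sum_prod_type]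
          refine Finset.sum_congr rfl fun s _ => ?_
          rw [Fintype.sum_prod_type]
          refine Finset.sum_congr rfl fun u _ => ?_
          rw [Fintype.sum_prod_type]
          refine Finset.sum_congr rfl fun v _ => ?_
          calc ∑ z : G × G, _ = auxQ K s u v * star (auxQ K s u v) := by
                rw [auxQ, star_sum, Finset.sum_mul_sum, Fintype.sum_prod_type]
            _ = (‖auxQ K s u v‖ : ℂ) ^ 2 := by
                rw [Complex.star_def, Complex.mul_conj, ← Complex.sq_norm]; push_cast; ring
  exact_mod_cast main

private lemma fmoment (f : G → ℂ) :
    ∑ z : G × G × G, ‖f z.1 * star (f (z.1 + z.2.2)) * star (f (z.1 + z.2.1))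
        * f (z.1 + z.2.1 + z.2.2)‖ ^ 2
      ≤ (∑ a, ‖f a‖ ^ 4) * (∑ a, ‖f a‖ ^ 2) ^ 2 := by
  set S2 := ∑ a, ‖f a‖ ^ 2 with hS2
  set S4 := ∑ a, ‖f a‖ ^ 4 with hS4
  set E : G → ℝ := fun w => ∑ a, ‖f a‖ ^ 2 * ‖f (a + w)‖ ^ 2 with hE
  have hEnn : ∀ w, 0 ≤ E w := fun w => Finset.sum_nonneg fun a _ => by positivity
  have hES4 : ∀ w, E w ≤ S4 := by
    intro w
    have := Real.sum_mul_le_sqrt_mul_sqrt univ (fun a => ‖f a‖ ^ 2)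
      (fun a => ‖f (a + w)‖ ^ 2)
    have h1 : ∑ a, (‖f a‖ ^ 2) ^ 2 = S4 := by
      refine Finset.sum_congr rfl fun a _ => by ring
    have h2 : ∑ a, (‖f (a + w)‖ ^ 2) ^ 2 = S4 := by
      rw [show (∑ a, (‖f (a + w)‖ ^ 2) ^ 2)
          = ∑ a, (‖f a‖ ^ 2) ^ 2 from
        Equiv.sum_comp (Equiv.addRight w) fun a => (‖f a‖ ^ 2) ^ 2]
      exact h1
    calc E w ≤ Real.sqrt (∑ a, (‖f a‖ ^ 2) ^ 2)
        * Real.sqrt (∑ a, (‖f (a + w)‖ ^ 2) ^ 2) := this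
      _ = S4 := by
          rw [h1, h2, Real.mul_self_sqrt (by positivity)]
  have hsum : ∑ w, E w = S2 ^ 2 := by
    calc ∑ w, E w = ∑ a, ∑ w, ‖f a‖ ^ 2 * ‖f (a + w)‖ ^ 2 :=
        Finset.sum_comm
      _ = ∑ a, ‖f a‖ ^ 2 * S2 := by
          refine Finset.sum_congr rfl fun a _ => ?_
          rw [← Finset.mul_sum]
          congr 1
          exact Equiv.sum_comp (Equiv.addLeft a) fun b => ‖f b‖ ^ 2
      _ = S2 ^ 2 := by rw [← Finset.sum_mul]; ring
  have main : (∑ z : G × G × G, ‖f z.1 * star (f (z.1 + z.2.2))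
        * star (f (z.1 + z.2.1)) * f (z.1 + z.2.1 + z.2.2)‖ ^ 2) = ∑ w, E w ^ 2 := by
    rw [Fintype.sum_prod_type]
    calc ∑ a : G, ∑ y : G × G, ‖f a * star (f (a + y.2)) * star (f (a + y.1))
            * f (a + y.1 + y.2)‖ ^ 2
        = ∑ a : G, ∑ u : G, ∑ w : G, (‖f a‖ ^ 2 * ‖f (a + w)‖ ^ 2)
            * (‖f (a + u)‖ ^ 2 * ‖f (a + u + w)‖ ^ 2) := by
          refine Finset.sum_congr rfl fun a _ => ?_
          rw [Fintype.sum_prod_type]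
          refine Finset.sum_congr rfl fun u _ => Finset.sum_congr rfl fun w _ => ?_
          simp only [norm_mul, Complex.norm_conj, Complex.star_def]
          ring
      _ = ∑ a : G, ∑ w : G, ∑ u : G, (‖f a‖ ^ 2 * ‖f (a + w)‖ ^ 2)
            * (‖f (a + u)‖ ^ 2 * ‖f (a + u + w)‖ ^ 2) := by
          exact Finset.sum_congr rfl fun a _ => Finset.sum_comm
      _ = ∑ a : G, ∑ w : G, (‖f a‖ ^ 2 * ‖f (a + w)‖ ^ 2) * E w := by
          refine Finset.sum_congr rfl fun a _ => Finset.sum_congr rfl fun w _ => ?_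
          rw [← Finset.mul_sum]
          congr 1
          exact Equiv.sum_comp (Equiv.addLeft a)
            (fun b => ‖f b‖ ^ 2 * ‖f (b + w)‖ ^ 2)
      _ = ∑ w, E w ^ 2 := by
          rw [Finset.sum_comm]
          refine Finset.sum_congr rfl fun w _ => ?_
          rw [← Finset.sum_mul, hE]
          ring
  rw [main]
  calc ∑ w, E w ^ 2 ≤ ∑ w, S4 * E w := by
        refine Finset.sum_le_sum fun w _ => ?_
        calc E w ^ 2 = E w * E w := by ring
          _ ≤ S4 * E w := mul_le_mul_of_nonneg_right (hES4 w) (hEnn w)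
    _ = S4 * S2 ^ 2 := by rw [← Finset.mul_sum, hsum]

private lemma step1 (f g : G → ℂ) (K : G → G → ℂ) :
    (∑ s, ‖∑ x, K (s - x) x * f (s - x) * g x‖ ^ 2)
      ≤ (∑ x, ‖g x‖ ^ 2) *
          Real.sqrt (∑ z : G × G, ‖auxH f K z.1 z.2‖ ^ 2) := by
  set A := ∑ s, ‖∑ x, K (s - x) x * f (s - x) * g x‖ ^ 2 with hA
  have hA0 : 0 ≤ A := Finset.sum_nonneg fun s _ => by positivity
  have h : A = ‖((A : ℝ) : ℂ)‖ := by rw [Complex.norm_of_nonneg hA0]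
  rw [h, hA, key1 f g K]
  refine (cs_abs (fun z : G × G => g z.1 * star (g z.2))
    (fun z : G × G => auxH f K z.1 z.2)).trans ?_
  have hg : Real.sqrt (∑ z : G × G, ‖g z.1 * star (g z.2)‖ ^ 2)
      = ∑ x, ‖g x‖ ^ 2 := by
    have e : (∑ z : G × G, ‖g z.1 * star (g z.2)‖ ^ 2)
        = (∑ x, ‖g x‖ ^ 2) * (∑ x, ‖g x‖ ^ 2) := by
      rw [Fintype.sum_prod_type, Finset.sum_mul_sum]
      refine Finset.sum_congr rfl fun x _ => Finset.sum_congr rfl fun y _ => ?_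
      simp only [norm_mul, Complex.star_def, Complex.norm_conj]
      ring
    rw [e, Real.sqrt_mul_self (by positivity)]
  rw [hg]

private lemma step2 (f : G → ℂ) (K : G → G → ℂ) :
    (∑ z : G × G, ‖auxH f K z.1 z.2‖ ^ 2)
      ≤ Real.sqrt ((∑ a, ‖f a‖ ^ 4) * (∑ a, ‖f a‖ ^ 2) ^ 2)
        * Real.sqrt (∑ z : G × G × G, ‖auxG K z.1 z.2.1 z.2.2‖ ^ 2) := by
  set X := ∑ z : G × G, ‖auxH f K z.1 z.2‖ ^ 2 with hX
  have hX0 : 0 ≤ X := Finset.sum_nonneg fun z _ => by positivity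
  have h : X = ‖((X : ℝ) : ℂ)‖ := by rw [Complex.norm_of_nonneg hX0]
  rw [h, hX, key2 f K]
  refine (cs_abs (fun z : G × G × G => f z.1 * star (f (z.1 + z.2.2)) * star (f (z.1 + z.2.1))
      * f (z.1 + z.2.1 + z.2.2))
    (fun z : G × G × G => auxG K z.1 z.2.1 z.2.2)).trans ?_
  refine mul_le_mul_of_nonneg_right ?_ (Real.sqrt_nonneg _)
  exact Real.sqrt_le_sqrt (fmoment f)

end Aux

/-- Unnormalized ℓ²-norm. -/
noncomputable def l2 (p : ℕ) [NeZero p] (f : ZMod p → ℂ) : ℝ :=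
  (∑ x : ZMod p, ‖f x‖ ^ 2) ^ ((1 : ℝ) / 2)

/-- Unnormalized ℓ⁴-norm. -/
noncomputable def l4 (p : ℕ) [NeZero p] (f : ZMod p → ℂ) : ℝ :=
  (∑ x : ZMod p, ‖f x‖ ^ 4) ^ ((1 : ℝ) / 4)

/-- The quantity Ω associated to a kernel K. -/
noncomputable def bigOmega (p : ℕ) [NeZero p] (K : ZMod p → ZMod p → ℂ) : ℝ :=
  (∑ s : ZMod p, ∑ u : ZMod p, ∑ v : ZMod p,
    ‖∑ x : ZMod p,
      K x (s - x) * star (K (x + u) (s - x)) * star (K x (s + v - x)) *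
        K (x + u) (s + v - x)‖ ^ 2) ^ ((1 : ℝ) / 2)

theorem stmt3 (p : ℕ) [NeZero p] (hp : p.Prime) (f g : ZMod p → ℂ) (K : ZMod p → ZMod p → ℂ) :
    (∑ s : ZMod p, ‖∑ x : ZMod p, K (s - x) x * f (s - x) * g x‖ ^ 2) ^ ((1 : ℝ) / 2)
      ≤ l2 p f ^ ((1 : ℝ) / 2) * l4 p f ^ ((1 : ℝ) / 2) * l2 p g *
        bigOmega p K ^ ((1 : ℝ) / 4) := by
  set A := ∑ s : ZMod p, ‖∑ x : ZMod p, K (s - x) x * f (s - x) * g x‖ ^ 2 with hAdef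
  set S2 := ∑ x : ZMod p, ‖f x‖ ^ 2 with hS2def
  set S4 := ∑ x : ZMod p, ‖f x‖ ^ 4 with hS4def
  set Sg := ∑ x : ZMod p, ‖g x‖ ^ 2 with hSgdef
  set X := ∑ z : ZMod p × ZMod p, ‖auxH f K z.1 z.2‖ ^ 2 with hXdef
  set W := ∑ z : ZMod p × ZMod p × ZMod p, ‖auxG K z.1 z.2.1 z.2.2‖ ^ 2 with hWdef
  set Om := ∑ s : ZMod p, ∑ u : ZMod p, ∑ v : ZMod p, ‖auxQ K s u v‖ ^ 2 with hOmdef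
  have hA0 : 0 ≤ A := Finset.sum_nonneg fun s _ => by positivity
  have hS20 : 0 ≤ S2 := Finset.sum_nonneg fun s _ => by positivity
  have hS40 : 0 ≤ S4 := Finset.sum_nonneg fun s _ => by positivity
  have hSg0 : 0 ≤ Sg := Finset.sum_nonneg fun s _ => by positivity
  have hX0 : 0 ≤ X := Finset.sum_nonneg fun s _ => by positivity
  have hW0 : 0 ≤ W := Finset.sum_nonneg fun s _ => by positivity
  have hOm0 : 0 ≤ Om := Finset.sum_nonneg fun s _ =>
    Finset.sum_nonneg fun u _ => Finset.sum_nonneg fun v _ => by positivity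
  have h1 : A ≤ Sg * Real.sqrt X := step1 f g K
  have h2 : X ≤ Real.sqrt (S4 * S2 ^ 2) * Real.sqrt W := step2 f K
  have h3 : W = Om := key3 K
  -- rewrite the goal in terms of square roots
  have hbigOmega : bigOmega p K = Real.sqrt Om := by
    rw [bigOmega, Real.sqrt_eq_rpow, hOmdef]; rfl
  have hl2f : l2 p f = Real.sqrt S2 := by rw [l2, Real.sqrt_eq_rpow, hS2def]
  have hl2g : l2 p g = Real.sqrt Sg := by rw [l2, Real.sqrt_eq_rpow, hSgdef]
  have hl4f : l4 p f = Real.sqrt (Real.sqrt S4) := by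
    rw [l4, hS4def, show (1 : ℝ) / 4 = 1 / 2 * (1 / 2) by norm_num,
      Real.rpow_mul hS40, ← Real.sqrt_eq_rpow, ← Real.sqrt_eq_rpow]
  have hquarter : ∀ y : ℝ, 0 ≤ y → y ^ ((1 : ℝ) / 4) = Real.sqrt (Real.sqrt y) := by
    intro y hy
    rw [show (1 : ℝ) / 4 = 1 / 2 * (1 / 2) by norm_num,
      Real.rpow_mul hy, ← Real.sqrt_eq_rpow, ← Real.sqrt_eq_rpow]
  rw [hbigOmega, hl2f, hl2g, hl4f, ← Real.sqrt_eq_rpow, ← Real.sqrt_eq_rpow,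
    ← Real.sqrt_eq_rpow, hquarter _ (Real.sqrt_nonneg _)]
  -- now the goal is in pure sqrt form
  have b1 : Real.sqrt A ≤ Real.sqrt Sg * Real.sqrt (Real.sqrt X) := by
    calc Real.sqrt A ≤ Real.sqrt (Sg * Real.sqrt X) := Real.sqrt_le_sqrt h1
      _ = Real.sqrt Sg * Real.sqrt (Real.sqrt X) := Real.sqrt_mul hSg0 _
  have b2 : Real.sqrt X ≤ Real.sqrt (Real.sqrt S4) * Real.sqrt S2 * Real.sqrt (Real.sqrt W) := by
    calc Real.sqrt X ≤ Real.sqrt (Real.sqrt (S4 * S2 ^ 2) * Real.sqrt W) := Real.sqrt_le_sqrt h2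
      _ = Real.sqrt (Real.sqrt (S4 * S2 ^ 2)) * Real.sqrt (Real.sqrt W) :=
          Real.sqrt_mul (Real.sqrt_nonneg _) _
      _ = Real.sqrt (Real.sqrt S4) * Real.sqrt S2 * Real.sqrt (Real.sqrt W) := by
          rw [Real.sqrt_mul hS40, Real.sqrt_sq hS20, Real.sqrt_mul (Real.sqrt_nonneg _)]
  have b3 : Real.sqrt (Real.sqrt X)
      ≤ Real.sqrt (Real.sqrt (Real.sqrt S4)) * Real.sqrt (Real.sqrt S2)
        * Real.sqrt (Real.sqrt (Real.sqrt W)) := by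
    calc Real.sqrt (Real.sqrt X)
        ≤ Real.sqrt (Real.sqrt (Real.sqrt S4) * Real.sqrt S2 * Real.sqrt (Real.sqrt W)) :=
          Real.sqrt_le_sqrt b2
      _ = _ := by
          rw [Real.sqrt_mul (by positivity), Real.sqrt_mul (Real.sqrt_nonneg _)]
  calc Real.sqrt A ≤ Real.sqrt Sg * Real.sqrt (Real.sqrt X) := b1
    _ ≤ Real.sqrt Sg * (Real.sqrt (Real.sqrt (Real.sqrt S4)) * Real.sqrt (Real.sqrt S2)
        * Real.sqrt (Real.sqrt (Real.sqrt W))) :=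
        mul_le_mul_of_nonneg_left b3 (Real.sqrt_nonneg _)
    _ = Real.sqrt (Real.sqrt S2) * Real.sqrt (Real.sqrt (Real.sqrt S4)) * Real.sqrt Sg
        * Real.sqrt (Real.sqrt (Real.sqrt Om)) := by rw [h3]; ring
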